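/- arXiv:1910.04819 — 3 statements merged into one kernel-verified Lean document; each statement's English description precedes it below -/
import Mathlib

section
/- For real numbers $x_1 > x_2 > 1$ and $p > 0$, the trigamma function satisfies $\psi^{(1)}(x_1) - \psi^{(1)}(x_2) < \psi^{(1)}(x_1+p) - \psi^{(1)}(x_2+p) < 0$. -/
open Real Set Filter Topology

lemma sum_invsq : Summable (fun n : ℕ => 1/((n:ℝ)+1)^2) := by
  have h := (summable_nat_add_iff (f := fun n : ℕ => 1/(n:ℝ)^2) 1).mpr
    (Real.summable_one_div_nat_pow.mpr one_lt_two)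
  refine h.congr fun n => by push_cast; ring

lemma summable_inv_sq_add (x : ℝ) (hx : 1 ≤ x) : Summable (fun n : ℕ => 1/(x+(n:ℝ))^2) := by
  refine Summable.of_nonneg_of_le (fun n => by positivity) (fun n => ?_) sum_invsq
  have h1 : (0:ℝ) < (n:ℝ)+1 := by positivity
  have h2 : (n:ℝ)+1 ≤ x+n := by linarith
  gcongr

lemma summable_phi_term (x : ℝ) (hx : 1 ≤ x) :
    Summable (fun n : ℕ => 1/((n:ℝ)+1) - 1/(x+(n:ℝ))) := by
  refine Summable.of_nonneg_of_le (fun n => ?_) (fun n => ?_) (sum_invsq.mul_left (x-1))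
  · have h1 : (0:ℝ) < (n:ℝ)+1 := by positivity
    have h2 : (n:ℝ)+1 ≤ x+n := by linarith
    simp only [sub_nonneg]
    gcongr
  · have h1 : (0:ℝ) < (n:ℝ)+1 := by positivity
    have h2 : (0:ℝ) < x+(n:ℝ) := by linarith
    rw [div_sub_div _ _ (ne_of_gt h1) (ne_of_gt h2)]
    have : 1*(x+(n:ℝ)) - ((n:ℝ)+1)*1 = x - 1 := by ring
    rw [this, div_le_iff₀ (by positivity)]
    have hn1 : ((n:ℝ)+1) ≤ x + n := by linarith
    calc x - 1 = (x-1) * 1 := by ring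
      _ ≤ (x-1) * (1/((n:ℝ)+1)^2 * (((n:ℝ)+1)*(x+n))) := by
          have : (1:ℝ) ≤ 1/((n:ℝ)+1)^2 * (((n:ℝ)+1)*(x+n)) := by
            rw [one_div, inv_mul_eq_div, le_div_iff₀ (by positivity)]
            nlinarith
          nlinarith [sub_nonneg.mpr hx, this]
      _ = (x-1) * (1/((n:ℝ)+1)^2) * (((n:ℝ)+1)*(x+n)) := by ring

noncomputable def phi (x : ℝ) : ℝ :=
  -Real.eulerMascheroniConstant + ∑' n : ℕ, (1/((n:ℝ)+1) - 1/(x+(n:ℝ)))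

lemma phi_one : phi 1 = -Real.eulerMascheroniConstant := by
  have h : ∀ n : ℕ, (1/((n:ℝ)+1) - 1/((1:ℝ)+(n:ℝ))) = 0 := fun n => by rw [add_comm]; ring
  have : (∑' n : ℕ, (1/((n:ℝ)+1) - 1/((1:ℝ)+(n:ℝ)))) = 0 := by rw [tsum_congr h]; exact tsum_zero
  rw [phi, this, add_zero]

lemma phi_rec (x : ℝ) (hx : 1 ≤ x) : phi (x+1) = phi x + 1/x := by
  have hx0 : (0:ℝ) < x := by linarith
  have hsum : HasSum (fun n : ℕ => 1/(x+(n:ℝ)) - 1/(x+((n:ℝ)+1))) (1/x) := by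
    have hnn : ∀ n : ℕ, 0 ≤ 1/(x+(n:ℝ)) - 1/(x+((n:ℝ)+1)) := by
      intro n
      have h1 : (0:ℝ) < x+(n:ℝ) := by positivity
      simp only [sub_nonneg]
      gcongr
      linarith
    rw [hasSum_iff_tendsto_nat_of_nonneg hnn]
    have htel : ∀ N : ℕ, ∑ n ∈ Finset.range N, (1/(x+(n:ℝ)) - 1/(x+((n:ℝ)+1)))
        = 1/x - 1/(x+N) := by
      intro N
      have := Finset.sum_range_sub' (f := fun n : ℕ => 1/(x+(n:ℝ))) N
      simp only [Nat.cast_add, Nat.cast_one] at this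
      simpa using this
    simp only [htel]
    have hz : Tendsto (fun N : ℕ => x+(N:ℝ)) atTop atTop :=
      tendsto_atTop_add_const_left _ x tendsto_natCast_atTop_atTop
    have : Tendsto (fun N : ℕ => 1/(x+(N:ℝ))) atTop (𝓝 0) := by
      simpa [one_div, Pi.inv_def] using hz.inv_tendsto_atTop
    simpa using (tendsto_const_nhds.sub this)
  have h1 := summable_phi_term x hx
  have h2 := summable_phi_term (x+1) (by linarith)
  have h2' : Summable (fun n : ℕ => 1/((n:ℝ)+1) - 1/(x+1+(n:ℝ))) := h2
  have key : (∑' n : ℕ, (1/((n:ℝ)+1) - 1/(x+1+(n:ℝ)))) -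
      (∑' n : ℕ, (1/((n:ℝ)+1) - 1/(x+(n:ℝ)))) = 1/x := by
    rw [← Summable.tsum_sub h2' h1]
    rw [← hsum.tsum_eq]
    exact tsum_congr fun n => by push_cast; ring
  simp only [phi]
  linarith [key]

lemma phi_mono : MonotoneOn phi (Ici (1:ℝ)) := by
  intro a ha b hb hab
  simp only [phi, add_le_add_iff_left]
  refine Summable.tsum_le_tsum (fun n => ?_) (summable_phi_term a ha) (summable_phi_term b hb)
  have h1 : (0:ℝ) < a+(n:ℝ) := by have := mem_Ici.mp ha; positivity
  gcongr

noncomputable def digamma (x : ℝ) : ℝ := deriv (fun y => Real.log (Real.Gamma y)) x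

lemma dLG (x : ℝ) (hx : 0 < x) : DifferentiableAt ℝ (fun y => Real.log (Real.Gamma y)) x := by
  have hne : ∀ m : ℕ, x ≠ -(m:ℝ) := fun m => by
    have : (0:ℝ) ≤ m := Nat.cast_nonneg m
    intro h; rw [h] at hx; linarith
  exact (Real.differentiableAt_Gamma hne).log (Real.Gamma_ne_zero hne)

lemma digamma_one : digamma 1 = -Real.eulerMascheroniConstant := by
  have hne : ∀ m : ℕ, (1:ℝ) ≠ -(m:ℝ) := fun m => by
    have : (0:ℝ) ≤ m := Nat.cast_nonneg m
    intro h; linarith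
  have h := Real.deriv_Gamma_nat 0
  simp only [Nat.cast_zero, zero_add, Nat.factorial_zero, Nat.cast_one, harmonic_zero,
    Rat.cast_zero, add_zero, one_mul] at h
  rw [digamma, deriv.log (Real.differentiableAt_Gamma hne) (by rw [Real.Gamma_one]; norm_num),
    h, Real.Gamma_one, div_one]

lemma digamma_rec (x : ℝ) (hx : 0 < x) : digamma (x+1) = digamma x + 1/x := by
  unfold digamma
  rw [← deriv_comp_add_const, one_div, ← Real.deriv_log,
    ← deriv_add (dLG x hx) (Real.differentiableAt_log hx.ne')]
  apply Filter.EventuallyEq.deriv_eq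
  filter_upwards [eventually_gt_nhds hx] with y hy
  rw [Real.Gamma_add_one hy.ne', Real.log_mul hy.ne' (Real.Gamma_pos_of_pos hy).ne', add_comm]
  rfl

lemma digamma_mono : MonotoneOn digamma (Set.Ioi (0:ℝ)) := by
  have h := ConvexOn.monotoneOn_deriv Real.convexOn_log_Gamma (fun x hx => dLG x hx)
  exact h

lemma digamma_nat : ∀ n : ℕ, digamma ((n:ℝ)+1) = phi ((n:ℝ)+1) := by
  intro n
  induction n with
  | zero => simp [digamma_one, phi_one]
  | succ n ih =>
      have h1 : (0:ℝ) < (n:ℝ)+1 := by positivity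
      have h2 : (1:ℝ) ≤ (n:ℝ)+1 := by linarith [Nat.cast_nonneg (α := ℝ) n]
      push_cast
      rw [show (n:ℝ)+1+1 = ((n:ℝ)+1)+1 by ring, digamma_rec _ h1, phi_rec _ h2, ih]

lemma digamma_eq_phi (x : ℝ) (hx : 1 ≤ x) : digamma x = phi x := by
  have hx0 : (0:ℝ) < x := by linarith
  have step : ∀ m : ℕ, digamma (x+(m:ℝ)) - phi (x+(m:ℝ)) = digamma x - phi x := by
    intro m
    induction m with
    | zero => simp
    | succ m ih =>
        have h1 : (0:ℝ) < x+(m:ℝ) := by positivity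
        have h2 : (1:ℝ) ≤ x+(m:ℝ) := by linarith [Nat.cast_nonneg (α := ℝ) m]
        push_cast
        rw [show x+((m:ℝ)+1) = (x+(m:ℝ))+1 by ring, digamma_rec _ h1, phi_rec _ h2]
        linarith [ih]
  have bound : ∀ m : ℕ, |digamma x - phi x| ≤ 1/((m:ℝ)+1) := by
    intro m
    have hxm0 : (0:ℝ) ≤ x+(m:ℝ) := by positivity
    have hk1 : m+1 ≤ Nat.floor (x+(m:ℝ)) := Nat.le_floor (by push_cast; linarith)
    have hkle : ((Nat.floor (x+(m:ℝ)):ℕ):ℝ) ≤ x+(m:ℝ) := Nat.floor_le hxm0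
    have hklt : x+(m:ℝ) < ((Nat.floor (x+(m:ℝ)):ℕ):ℝ)+1 := Nat.lt_floor_add_one _
    obtain ⟨j, hj⟩ : ∃ j, Nat.floor (x+(m:ℝ)) = j + 1 := ⟨Nat.floor (x+(m:ℝ)) - 1, by omega⟩
    rw [hj] at hkle hklt hk1
    have hj1 : ((j:ℝ)+1) ≤ x+(m:ℝ) := by push_cast at hkle ⊢; linarith
    have hj2 : x+(m:ℝ) ≤ ((j:ℝ)+1)+1 := by push_cast at hklt ⊢; linarith
    have hj0 : (0:ℝ) < (j:ℝ)+1 := by positivity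
    have hA : digamma ((j:ℝ)+1) = phi ((j:ℝ)+1) := digamma_nat j
    have hB : digamma (((j:ℝ)+1)+1) = phi (((j:ℝ)+1)+1) := by
      have := digamma_nat (j+1); push_cast at this; exact this
    have hrec : phi (((j:ℝ)+1)+1) = phi ((j:ℝ)+1) + 1/((j:ℝ)+1) :=
      phi_rec _ (by linarith [Nat.cast_nonneg (α := ℝ) j])
    have hd1 : digamma ((j:ℝ)+1) ≤ digamma (x+(m:ℝ)) :=
      digamma_mono (Set.mem_Ioi.mpr hj0) (Set.mem_Ioi.mpr (by linarith)) hj1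
    have hd2 : digamma (x+(m:ℝ)) ≤ digamma (((j:ℝ)+1)+1) :=
      digamma_mono (Set.mem_Ioi.mpr (by linarith)) (Set.mem_Ioi.mpr (by linarith)) hj2
    have hp1 : phi ((j:ℝ)+1) ≤ phi (x+(m:ℝ)) :=
      phi_mono (Set.mem_Ici.mpr (by linarith [Nat.cast_nonneg (α := ℝ) j]))
        (Set.mem_Ici.mpr (by linarith [Nat.cast_nonneg (α := ℝ) m])) hj1
    have hp2 : phi (x+(m:ℝ)) ≤ phi (((j:ℝ)+1)+1) :=
      phi_mono (Set.mem_Ici.mpr (by linarith [Nat.cast_nonneg (α := ℝ) m]))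
        (Set.mem_Ici.mpr (by linarith [Nat.cast_nonneg (α := ℝ) j])) hj2
    have hjm : 1/((j:ℝ)+1) ≤ 1/((m:ℝ)+1) := by
      have hmj : (m:ℝ)+1 ≤ (j:ℝ)+1 := by exact_mod_cast Nat.succ_le_of_lt (by omega)
      gcongr
    rw [← step m, abs_le]
    constructor
    · linarith
    · linarith
  have htend : Filter.Tendsto (fun m : ℕ => 1/((m:ℝ)+1)) Filter.atTop (𝓝 0) :=
    tendsto_one_div_add_atTop_nhds_zero_nat
  have h0 : |digamma x - phi x| ≤ 0 := ge_of_tendsto htend (Filter.Eventually.of_forall bound)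
  have := abs_nonneg (digamma x - phi x)
  have : |digamma x - phi x| = 0 := le_antisymm h0 this
  have := abs_eq_zero.mp this
  linarith

noncomputable def trigamma (x : ℝ) : ℝ := deriv digamma x

lemma hasDerivAt_phi (x : ℝ) (hx : 1 < x) :
    HasDerivAt phi (∑' n : ℕ, 1/(x+(n:ℝ))^2) x := by
  have hg : ∀ (n : ℕ) (y : ℝ), y ∈ Set.Ioi (1:ℝ) →
      HasDerivAt (fun z : ℝ => 1/((n:ℝ)+1) - 1/(z+(n:ℝ))) (1/(y+(n:ℝ))^2) y := by
    intro n y hy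
    have hy1 : (1:ℝ) < y := hy
    have hy0 : (0:ℝ) < y + (n:ℝ) := by positivity
    have h : HasDerivAt (fun z : ℝ => z + (n:ℝ)) 1 y := (hasDerivAt_id y).add_const _
    have h2 := h.inv hy0.ne'
    have h3 := h2.const_sub (1/((n:ℝ)+1))
    have hval : -(-1 / (y+(n:ℝ))^2) = 1/(y+(n:ℝ))^2 := by ring
    rw [hval] at h3
    simpa [one_div] using h3
  have hg' : ∀ (n : ℕ) (y : ℝ), y ∈ Set.Ioi (1:ℝ) → ‖1/(y+(n:ℝ))^2‖ ≤ 1/((n:ℝ)+1)^2 := by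
    intro n y hy
    have hy1 : (1:ℝ) < y := hy
    have hy0 : (0:ℝ) < y + (n:ℝ) := by positivity
    rw [Real.norm_eq_abs, abs_of_pos (by positivity)]
    have h1 : ((n:ℝ)+1)^2 ≤ (y+(n:ℝ))^2 := by nlinarith [Nat.cast_nonneg (α := ℝ) n]
    exact one_div_le_one_div_of_le (by positivity) h1
  have H := hasDerivAt_tsum_of_isPreconnected sum_invsq isOpen_Ioi
    (convex_Ioi (1:ℝ)).isPreconnected hg hg' (Set.mem_Ioi.mpr hx)
    (summable_phi_term x hx.le) (Set.mem_Ioi.mpr hx)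
  exact H.const_add (-Real.eulerMascheroniConstant)

lemma trigamma_eq (x : ℝ) (hx : 1 < x) : trigamma x = ∑' n : ℕ, 1/(x+(n:ℝ))^2 := by
  have heq : digamma =ᶠ[𝓝 x] phi := by
    filter_upwards [eventually_gt_nhds hx] with y hy using digamma_eq_phi y hy.le
  rw [trigamma, heq.deriv_eq, (hasDerivAt_phi x hx).deriv]

lemma key_ineq (a b p : ℝ) (ha : 0 < a) (hab : a < b) (hp : 0 < p) :
    1/b^2 + 1/(a+p)^2 < 1/a^2 + 1/(b+p)^2 := by
  have hb : 0 < b := ha.trans hab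
  have hap : (0:ℝ) < a + p := by linarith
  have hbp : (0:ℝ) < b + p := by linarith
  have key : (2*b+p)*(a^2*(a+p)^2) < (2*a+p)*(b^2*(b+p)^2) := by
    calc (2*b+p)*(a^2*(a+p)^2) < (2*a+p)*((a*b)*(a+p)^2) := by
          nlinarith [mul_pos (mul_pos ha (mul_pos hap hap)) (mul_pos hp (sub_pos.mpr hab))]
      _ ≤ (2*a+p)*(b^2*(b+p)^2) := by
          have h0 : (a+p)^2 < (b+p)^2 := by nlinarith
          have h1 : a*(a+p)^2 < b*(b+p)^2 := by
            nlinarith [mul_lt_mul_of_pos_left h0 hb, mul_pos hap hap]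
          nlinarith [mul_pos hb (sub_pos.mpr h1), mul_pos ha hp]
  rw [div_add_div _ _ (by positivity) (by positivity),
    div_add_div _ _ (by positivity) (by positivity),
    div_lt_div_iff₀ (by positivity) (by positivity)]
  nlinarith [mul_pos hp (sub_pos.mpr key)]

theorem stmt_2 (x₁ x₂ p : ℝ) (h12 : x₂ < x₁) (h2 : 1 < x₂) (hp : 0 < p) :
    trigamma x₁ - trigamma x₂ < trigamma (x₁ + p) - trigamma (x₂ + p) ∧
      trigamma (x₁ + p) - trigamma (x₂ + p) < 0 := by
  have h1 : 1 < x₁ := h2.trans h12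
  have S1 := summable_inv_sq_add x₁ h1.le
  have S2 := summable_inv_sq_add x₂ h2.le
  have S1p := summable_inv_sq_add (x₁+p) (by linarith)
  have S2p := summable_inv_sq_add (x₂+p) (by linarith)
  rw [trigamma_eq x₁ h1, trigamma_eq x₂ h2, trigamma_eq _ (show (1:ℝ) < x₁+p by linarith),
    trigamma_eq _ (show (1:ℝ) < x₂+p by linarith)]
  have hterm : ∀ n : ℕ, 1/(x₁+(n:ℝ))^2 + 1/(x₂+p+(n:ℝ))^2
      < 1/(x₁+p+(n:ℝ))^2 + 1/(x₂+(n:ℝ))^2 := by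
    intro n
    have hn : (0:ℝ) ≤ n := Nat.cast_nonneg n
    have hkey := key_ineq (x₂+(n:ℝ)) (x₁+(n:ℝ)) p (by linarith) (by linarith) hp
    rw [show x₂+(n:ℝ)+p = x₂+p+(n:ℝ) by ring, show x₁+(n:ℝ)+p = x₁+p+(n:ℝ) by ring] at hkey
    linarith
  constructor
  · rw [sub_lt_sub_iff, ← Summable.tsum_add S1 S2p, ← Summable.tsum_add S1p S2]
    exact Summable.tsum_lt_tsum (i := 0) (fun n => (hterm n).le) (hterm 0) (S1.add S2p) (S1p.add S2)
  · rw [sub_neg]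
    refine Summable.tsum_lt_tsum (i := 0) (fun n => ?_) ?_ S1p S2p
    · have hn : (0:ℝ) ≤ n := Nat.cast_nonneg n
      have hsq : (x₂+p+(n:ℝ))^2 ≤ (x₁+p+(n:ℝ))^2 := by nlinarith
      exact one_div_le_one_div_of_le (by positivity) hsq
    · have hsq : (x₂+p+((0:ℕ):ℝ))^2 < (x₁+p+((0:ℕ):ℝ))^2 := by push_cast; nlinarith
      exact one_div_lt_one_div_of_lt (by positivity) hsq
end

section
/- For any $z > 1$ and fixed $p > 0$, the function $q(\alpha) = (\alpha-1)^2\,(\psi^{(1)}(\alpha) - \psi^{(1)}(\alpha+z))$ is increasing in $\alpha$ on $(1,\infty)$. -/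
open Real MeasureTheory Set Filter Topology Finset

namespace Aux

/-- target trigamma series -/
noncomputable def T (x : ℝ) : ℝ := ∑' m : ℕ, ((x + m) ^ 2)⁻¹

/-- digamma series -/
noncomputable def psi (x : ℝ) : ℝ :=
  -eulerMascheroniConstant + ∑' m : ℕ, (((m : ℝ) + 1)⁻¹ - (x + m)⁻¹)

/-- derivative sequence of logGammaSeq -/
noncomputable def d (n : ℕ) (x : ℝ) : ℝ :=
  Real.log n - ∑ m ∈ Finset.range (n + 1), (x + m)⁻¹

noncomputable def d2 (n : ℕ) (x : ℝ) : ℝ :=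
  ∑ m ∈ Finset.range (n + 1), ((x + m) ^ 2)⁻¹

lemma summable_aux (a : ℝ) (ha : 0 < a) :
    Summable (fun m : ℕ => (((m : ℝ) + 1) * (a + m))⁻¹) := by
  have h1 : Summable (fun m : ℕ => (min a 1)⁻¹ * (((m : ℝ) + 1) ^ 2)⁻¹) := by
    apply Summable.mul_left
    have := (summable_nat_add_iff (f := fun n : ℕ => ((n : ℝ) ^ 2)⁻¹) 1).mpr ?_
    · simpa [add_comm] using this
    · simpa using Real.summable_one_div_nat_pow.mpr one_lt_two
  refine Summable.of_nonneg_of_le (fun m => by positivity) (fun m => ?_) h1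
  have hm : (0:ℝ) < (m:ℝ) + 1 := by positivity
  have hmin : 0 < min a 1 := lt_min ha one_pos
  have key : min a 1 * ((m : ℝ) + 1) ≤ a + m := by
    have h1 : min a 1 ≤ a := min_le_left _ _
    have h2 : min a 1 ≤ 1 := min_le_right _ _
    nlinarith [Nat.cast_nonneg (α := ℝ) m]
  rw [← mul_inv, inv_le_inv₀ (by positivity) (by positivity)]
  nlinarith [sq_nonneg ((m:ℝ)+1)]

lemma summable_T (x : ℝ) (hx : 0 < x) : Summable (fun m : ℕ => ((x + m) ^ 2)⁻¹) := by
  have h1 : Summable (fun m : ℕ => ((min x 1)^2)⁻¹ * (((m : ℝ) + 1) ^ 2)⁻¹) := by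
    apply Summable.mul_left
    have := (summable_nat_add_iff (f := fun n : ℕ => ((n : ℝ) ^ 2)⁻¹) 1).mpr ?_
    · simpa [add_comm] using this
    · simpa using Real.summable_one_div_nat_pow.mpr one_lt_two
  refine Summable.of_nonneg_of_le (fun m => by positivity) (fun m => ?_) h1
  have hm : (0:ℝ) < (m:ℝ) + 1 := by positivity
  have hmin : 0 < min x 1 := lt_min hx one_pos
  have key : min x 1 * ((m : ℝ) + 1) ≤ x + m := by
    have h1 : min x 1 ≤ x := min_le_left _ _
    have h2 : min x 1 ≤ 1 := min_le_right _ _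
    nlinarith [Nat.cast_nonneg (α := ℝ) m]
  rw [← mul_inv, inv_le_inv₀ (by positivity) (by positivity)]
  calc min x 1 ^ 2 * ((m:ℝ)+1)^2 = (min x 1 * ((m:ℝ)+1))^2 := by ring
  _ ≤ (x + m)^2 := by
      have : (0:ℝ) ≤ min x 1 * ((m:ℝ)+1) := by positivity
      nlinarith

lemma summable_psi (x : ℝ) (hx : 0 < x) :
    Summable (fun m : ℕ => (((m : ℝ) + 1)⁻¹ - (x + m)⁻¹)) := by
  have : ∀ m : ℕ, (((m : ℝ) + 1)⁻¹ - (x + m)⁻¹) = (x - 1) * (((m : ℝ) + 1) * (x + m))⁻¹ := by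
    intro m
    have hm : (0:ℝ) < (m:ℝ) + 1 := by positivity
    have hxm : (0:ℝ) < x + m := by positivity
    field_simp
    ring
  simp_rw [this]
  exact (summable_aux x hx).mul_left _

end Aux

namespace Aux

noncomputable def c (n : ℕ) : ℝ := Real.log n - ∑ m ∈ Finset.range (n + 1), ((m : ℝ) + 1)⁻¹

lemma d_eq (n : ℕ) (x : ℝ) :
    d n x = c n + ∑ m ∈ Finset.range (n + 1), (((m : ℝ) + 1)⁻¹ - (x + m)⁻¹) := by
  simp [d, c, Finset.sum_sub_distrib]

lemma tendsto_c : Tendsto c atTop (𝓝 (-Real.eulerMascheroniConstant)) := by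
  have h1 : ∀ n : ℕ, c n = -(Real.eulerMascheroniSeq (n+1)) - (Real.log (n+2) - Real.log n) := by
    intro n
    have hh : ((harmonic (n+1) : ℚ) : ℝ) = ∑ m ∈ Finset.range (n + 1), ((m : ℝ) + 1)⁻¹ := by
      rw [harmonic]
      push_cast
      ring
    rw [c, Real.eulerMascheroniSeq, hh]
    have h2 : ((n:ℝ)+1+1) = (n:ℝ)+2 := by ring
    push_cast
    rw [h2]
    ring_nf
  rw [show -Real.eulerMascheroniConstant = -Real.eulerMascheroniConstant - 0 by ring]
  refine Tendsto.congr (fun n => (h1 n).symm) (Tendsto.sub ?_ ?_)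
  · exact (Real.tendsto_eulerMascheroniSeq.comp (tendsto_add_atTop_nat 1)).neg.congr
      (fun n => rfl)
  · have h2 : Tendsto (fun n : ℕ => Real.log (n+2) - Real.log (n+1)) atTop (𝓝 0) := by
      have := Real.tendsto_log_nat_add_one_sub_log.comp (tendsto_add_atTop_nat 1)
      apply this.congr
      intro n
      simp only [Function.comp_apply]
      push_cast
      ring_nf
    have h3 := h2.add Real.tendsto_log_nat_add_one_sub_log
    rw [add_zero] at h3
    apply h3.congr
    intro n
    push_cast
    ring

end Aux

namespace Aux

lemma hasDerivAt_logGammaSeq {x : ℝ} (hx : 0 < x) (n : ℕ) :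
    HasDerivAt (fun y => Real.BohrMollerup.logGammaSeq y n) (d n x) x := by
  unfold Real.BohrMollerup.logGammaSeq d
  apply HasDerivAt.sub
  · simpa using ((hasDerivAt_id x).mul_const (Real.log n)).add_const (Real.log (Nat.factorial n))
  · apply HasDerivAt.fun_sum
    intro m _
    have hxm : x + (m:ℝ) ≠ 0 := by positivity
    simpa using ((hasDerivAt_id x).add_const (m:ℝ)).log hxm

lemma hasDerivAt_d {x : ℝ} (hx : 0 < x) (n : ℕ) :
    HasDerivAt (d n) (d2 n x) x := by
  unfold d d2
  have h : HasDerivAt (fun y : ℝ => ∑ m ∈ Finset.range (n + 1), (y + m)⁻¹)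
      (∑ m ∈ Finset.range (n + 1), -((x + m) ^ 2)⁻¹) x := by
    apply HasDerivAt.fun_sum
    intro m _
    have hxm : x + (m:ℝ) ≠ 0 := by positivity
    have := ((hasDerivAt_id x).add_const (m:ℝ)).inv hxm
    simp [neg_div, one_div] at this
    exact this
  have := (hasDerivAt_const x (Real.log n)).fun_sub h
  simpa [Finset.sum_neg_distrib] using this

end Aux

namespace Aux

lemma tuo_add_const {c : ℕ → ℝ} {L : ℝ} {S : ℕ → ℝ → ℝ} {g : ℝ → ℝ} {K : Set ℝ}
    (h1 : Tendsto c atTop (𝓝 L)) (h2 : TendstoUniformlyOn S g atTop K) :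
    TendstoUniformlyOn (fun n x => c n + S n x) (fun x => L + g x) atTop K := by
  rw [Metric.tendstoUniformlyOn_iff] at h2 ⊢
  intro ε hε
  have hc := (Metric.tendsto_nhds.mp h1) (ε/2) (by positivity)
  filter_upwards [hc, h2 (ε/2) (by positivity)] with n hn h2n x hx
  calc dist (L + g x) (c n + S n x) ≤ dist L (c n) + dist (g x) (S n x) := dist_add_add_le _ _ _ _
  _ < ε/2 + ε/2 := by
      have := h2n x hx
      rw [dist_comm] at hn
      linarith
  _ = ε := by ring

lemma bound_sq {a b x : ℝ} (ha : 0 < a) (hx : x ∈ Set.Icc a b) (m : ℕ) :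
    ‖((x + m) ^ 2)⁻¹‖ ≤ ((min a 1)^2)⁻¹ * (((m:ℝ) + 1) ^ 2)⁻¹ := by
  have hm : (0:ℝ) ≤ (m:ℝ) := Nat.cast_nonneg m
  have hxa : a ≤ x := hx.1
  have hmin : 0 < min a 1 := lt_min ha one_pos
  have h1 : min a 1 ≤ a := min_le_left _ _
  have h2 : min a 1 ≤ 1 := min_le_right _ _
  have hxpos : 0 < x + m := by nlinarith
  rw [norm_inv, norm_pow, Real.norm_eq_abs, abs_of_pos (by nlinarith : (0:ℝ) < x + m)]
  rw [← mul_inv, inv_le_inv₀ (by positivity) (by positivity)]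
  calc min a 1 ^ 2 * ((m:ℝ)+1)^2 = (min a 1 * ((m:ℝ)+1))^2 := by ring
  _ ≤ (x + m)^2 := by
      have key : min a 1 * ((m:ℝ)+1) ≤ x + m := by nlinarith
      nlinarith [mul_pos hmin (by positivity : (0:ℝ) < (m:ℝ)+1)]

lemma summable_u2 (a : ℝ) : Summable (fun m : ℕ => ((min a 1)^2)⁻¹ * (((m:ℝ) + 1) ^ 2)⁻¹) := by
  apply Summable.mul_left
  have := (summable_nat_add_iff (f := fun n : ℕ => ((n : ℝ) ^ 2)⁻¹) 1).mpr ?_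
  · simpa [add_comm] using this
  · simpa using Real.summable_one_div_nat_pow.mpr one_lt_two

lemma tlu_d2 : TendstoLocallyUniformlyOn d2 T atTop (Set.Ioi (0:ℝ)) := by
  rw [tendstoLocallyUniformlyOn_iff_forall_isCompact isOpen_Ioi]
  intro K hK hKc
  rcases K.eq_empty_or_nonempty with rfl | hne
  · simp [TendstoUniformlyOn]
  have ha : 0 < sInf K := hK (hKc.sInf_mem hne)
  have hsub : K ⊆ Set.Icc (sInf K) (sSup K) :=
    fun x hx => ⟨csInf_le hKc.bddBelow hx, le_csSup hKc.bddAbove hx⟩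
  have H := tendstoUniformlyOn_tsum_nat (f := fun m (x:ℝ) => ((x + m) ^ 2)⁻¹)
    (summable_u2 (sInf K)) (fun m x hx => bound_sq ha (hsub hx) m)
  intro u hu
  exact (tendsto_add_atTop_nat 1).eventually (H u hu)

end Aux

namespace Aux

lemma bound_t {a b x : ℝ} (ha : 0 < a) (hx : x ∈ Set.Icc a b) (m : ℕ) :
    ‖((m:ℝ) + 1)⁻¹ - (x + m)⁻¹‖ ≤ (|b|+1) * ((min a 1)⁻¹ * (((m:ℝ) + 1) ^ 2)⁻¹) := by
  have hm : (0:ℝ) ≤ (m:ℝ) := Nat.cast_nonneg m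
  have hxa : a ≤ x := hx.1
  have hxb : x ≤ b := hx.2
  have hmin : 0 < min a 1 := lt_min ha one_pos
  have h1 : min a 1 ≤ a := min_le_left _ _
  have h2 : min a 1 ≤ 1 := min_le_right _ _
  have hxpos : 0 < x + m := by nlinarith
  have hmp : (0:ℝ) < (m:ℝ)+1 := by positivity
  have heq : ((m:ℝ) + 1)⁻¹ - (x + m)⁻¹ = (x - 1) * (((m:ℝ) + 1) * (x + m))⁻¹ := by
    field_simp; ring
  rw [heq, norm_mul, norm_inv, Real.norm_eq_abs, Real.norm_eq_abs,
    abs_of_pos (by positivity : (0:ℝ) < ((m:ℝ)+1) * (x+m))]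
  have hb1 : |x - 1| ≤ |b| + 1 := by
    rw [abs_le]; constructor
    · nlinarith [abs_nonneg b]
    · nlinarith [le_abs_self b]
  have key : min a 1 * ((m:ℝ)+1) ≤ x + m := by nlinarith
  have h3 : (((m:ℝ) + 1) * (x + m))⁻¹ ≤ (min a 1)⁻¹ * (((m:ℝ) + 1) ^ 2)⁻¹ := by
    rw [← mul_inv, inv_le_inv₀ (by positivity) (by positivity)]
    calc min a 1 * ((m:ℝ)+1)^2 = (min a 1 * ((m:ℝ)+1)) * ((m:ℝ)+1) := by ring
    _ ≤ (x + m) * ((m:ℝ)+1) := by nlinarith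
    _ = ((m:ℝ)+1) * (x+m) := by ring
  apply mul_le_mul hb1 h3 (by positivity) (by positivity)

lemma tlu_d : TendstoLocallyUniformlyOn d psi atTop (Set.Ioi (0:ℝ)) := by
  rw [tendstoLocallyUniformlyOn_iff_forall_isCompact isOpen_Ioi]
  intro K hK hKc
  rcases K.eq_empty_or_nonempty with rfl | hne
  · simp [TendstoUniformlyOn]
  have ha : 0 < sInf K := hK (hKc.sInf_mem hne)
  have hsub : K ⊆ Set.Icc (sInf K) (sSup K) :=
    fun x hx => ⟨csInf_le hKc.bddBelow hx, le_csSup hKc.bddAbove hx⟩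
  have hu : Summable (fun m : ℕ => (|sSup K|+1) * ((min (sInf K) 1)⁻¹ * (((m:ℝ) + 1) ^ 2)⁻¹)) := by
    apply Summable.mul_left
    apply Summable.mul_left
    have := (summable_nat_add_iff (f := fun n : ℕ => ((n : ℝ) ^ 2)⁻¹) 1).mpr ?_
    · simpa [add_comm] using this
    · simpa using Real.summable_one_div_nat_pow.mpr one_lt_two
  have H := tendstoUniformlyOn_tsum_nat
    (f := fun m (x:ℝ) => ((m:ℝ) + 1)⁻¹ - (x + m)⁻¹) hu
    (fun m x hx => bound_t ha (hsub hx) m)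
  have H' : TendstoUniformlyOn (fun n (x:ℝ) => ∑ m ∈ Finset.range (n+1), (((m:ℝ) + 1)⁻¹ - (x + m)⁻¹))
      (fun x => ∑' m : ℕ, (((m:ℝ) + 1)⁻¹ - (x + m)⁻¹)) atTop K :=
    fun u hu' => (tendsto_add_atTop_nat 1).eventually (H u hu')
  have H2 := tuo_add_const (L := -Real.eulerMascheroniConstant) (c := c) tendsto_c H'
  exact H2.congr (Eventually.of_forall fun n x _ => (d_eq n x).symm)

end Aux

namespace Aux

lemma hasDerivAt_logGamma {x : ℝ} (hx : 0 < x) :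
    HasDerivAt (fun y => Real.log (Real.Gamma y)) (psi x) x := by
  apply hasDerivAt_of_tendstoLocallyUniformlyOn isOpen_Ioi tlu_d
    (Eventually.of_forall fun n y hy => hasDerivAt_logGammaSeq hy n)
    (fun y hy => Real.BohrMollerup.tendsto_log_gamma hy) hx

lemma hasDerivAt_psi {x : ℝ} (hx : 0 < x) : HasDerivAt psi (T x) x := by
  apply hasDerivAt_of_tendstoLocallyUniformlyOn isOpen_Ioi tlu_d2
    (Eventually.of_forall fun n y hy => hasDerivAt_d hy n)
    (fun y hy => tlu_d.tendsto_at hy) hx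

lemma digamma_eq {x : ℝ} (hx : 0 < x) : digamma x = psi x :=
  (hasDerivAt_logGamma hx).deriv

lemma trigamma_eq {x : ℝ} (hx : 0 < x) : trigamma x = T x := by
  have hev : digamma =ᶠ[𝓝 x] psi :=
    Filter.eventuallyEq_of_mem (isOpen_Ioi.mem_nhds hx) (fun y hy => digamma_eq hy)
  rw [trigamma, hev.deriv_eq, (hasDerivAt_psi hx).deriv]

end Aux

namespace Aux

lemma base_integral : ∫ x in Set.Ioi (0:ℝ), Real.exp (-x) * x = 1 := by
  have h := Real.Gamma_eq_integral (s := 2) two_pos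
  have h2 : Real.Gamma 2 = 1 := by
    rw [show (2:ℝ) = (1:ℕ)+1 by norm_num, Real.Gamma_nat_eq_factorial]
    simp
  rw [h2] at h
  calc ∫ x in Set.Ioi (0:ℝ), Real.exp (-x) * x
      = ∫ x in Set.Ioi (0:ℝ), Real.exp (-x) * x ^ ((2:ℝ) - 1) := by
        apply setIntegral_congr_fun measurableSet_Ioi
        intro x hx
        simp [show (2:ℝ) - 1 = 1 by norm_num]
  _ = 1 := h.symm

lemma integrableOn_base : IntegrableOn (fun x => Real.exp (-x) * x) (Set.Ioi (0:ℝ)) := by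
  have := Real.GammaIntegral_convergent (s := 2) two_pos
  apply this.congr_fun ?_ measurableSet_Ioi
  intro x hx
  simp [show (2:ℝ) - 1 = 1 by norm_num]

lemma integrableOn_texp {a : ℝ} (ha : 0 < a) :
    IntegrableOn (fun t => t * Real.exp (-(a*t))) (Set.Ioi (0:ℝ)) := by
  have h := (integrableOn_Ioi_comp_mul_left_iff (fun y => Real.exp (-y) * y) 0 ha).mpr
    (by simpa using integrableOn_base)
  have h2 : IntegrableOn (fun x => a⁻¹ * (Real.exp (-(a * x)) * (a * x))) (Set.Ioi (0:ℝ)) :=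
    h.const_mul a⁻¹
  apply h2.congr_fun ?_ measurableSet_Ioi
  intro x hx
  field_simp

lemma integral_texp {a : ℝ} (ha : 0 < a) :
    ∫ t in Set.Ioi (0:ℝ), t * Real.exp (-(a*t)) = (a^2)⁻¹ := by
  have h := integral_comp_mul_left_Ioi (fun y => Real.exp (-y) * y) 0 ha
  rw [mul_zero, base_integral, smul_eq_mul, mul_one] at h
  have h2 : ∫ x in Set.Ioi (0:ℝ), Real.exp (-(a * x)) * (a * x)
      = a * ∫ x in Set.Ioi (0:ℝ), x * Real.exp (-(a*x)) := by
    rw [← MeasureTheory.integral_const_mul]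
    apply setIntegral_congr_fun measurableSet_Ioi
    intro x hx
    ring
  rw [h2] at h
  have : ∫ x in Set.Ioi (0:ℝ), x * Real.exp (-(a*x)) = a⁻¹ * a⁻¹ := by
    field_simp at h ⊢
    nlinarith [h]
  rw [this]
  rw [sq]
  rw [mul_inv]

end Aux

namespace Aux

lemma f_integral {x z : ℝ} (hx : 0 < x) (hz : 0 < z) (m : ℕ) :
    ∫ t in Set.Ioi (0:ℝ), (t * Real.exp (-((x+m)*t)) - t * Real.exp (-((x+z+m)*t)))
      = ((x+m)^2)⁻¹ - ((x+z+m)^2)⁻¹ := by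
  have h1 : (0:ℝ) < x + m := by positivity
  have h2 : (0:ℝ) < x + z + m := by positivity
  rw [MeasureTheory.integral_sub (integrableOn_texp h1) (integrableOn_texp h2),
    integral_texp h1, integral_texp h2]

lemma f_nonneg {x z : ℝ} (hz : 0 < z) (m : ℕ) {t : ℝ} (ht : 0 < t) :
    0 ≤ t * Real.exp (-((x+m)*t)) - t * Real.exp (-((x+z+m)*t)) := by
  have : Real.exp (-((x+z+m)*t)) ≤ Real.exp (-((x+m)*t)) := by
    apply Real.exp_le_exp.mpr
    nlinarith
  nlinarith

lemma f_integral_norm {x z : ℝ} (hx : 0 < x) (hz : 0 < z) (m : ℕ) :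
    ∫ t in Set.Ioi (0:ℝ), ‖t * Real.exp (-((x+m)*t)) - t * Real.exp (-((x+z+m)*t))‖
      = ((x+m)^2)⁻¹ - ((x+z+m)^2)⁻¹ := by
  rw [← f_integral hx hz m]
  apply MeasureTheory.integral_congr_ae
  filter_upwards [MeasureTheory.ae_restrict_mem measurableSet_Ioi] with t ht
  rw [Real.norm_eq_abs, abs_of_nonneg (f_nonneg hz m ht)]

lemma summable_values {x z : ℝ} (hx : 0 < x) (hz : 0 < z) :
    Summable (fun m : ℕ => ((x+m)^2)⁻¹ - ((x+z+m)^2)⁻¹) :=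
  (summable_T x hx).sub (summable_T (x+z) (by positivity))

lemma tsum_f {x z : ℝ} (hx : 0 < x) (hz : 0 < z) {t : ℝ} (ht : 0 < t) :
    ∑' m : ℕ, (t * Real.exp (-((x+m)*t)) - t * Real.exp (-((x+z+m)*t)))
      = t * Real.exp (-(x*t)) * (1 - Real.exp (-(z*t))) / (1 - Real.exp (-t)) := by
  have hr0 : 0 ≤ Real.exp (-t) := (Real.exp_pos _).le
  have hr1 : Real.exp (-t) < 1 := Real.exp_lt_one_iff.mpr (by linarith)
  have heq : ∀ m : ℕ, (t * Real.exp (-((x+m)*t)) - t * Real.exp (-((x+z+m)*t)))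
      = (t * Real.exp (-(x*t)) * (1 - Real.exp (-(z*t)))) * (Real.exp (-t))^m := by
    intro m
    rw [← Real.exp_nat_mul]
    rw [show -((x+m)*t) = -(x*t) + m * -t by ring, show -((x+z+m)*t) = -(x*t) + -(z*t) + m * -t by ring]
    rw [Real.exp_add, Real.exp_add, Real.exp_add]
    ring
  simp_rw [heq]
  rw [tsum_mul_left, tsum_geometric_of_lt_one hr0 hr1]
  rw [div_eq_mul_inv]

lemma T_sub {x z : ℝ} (hx : 0 < x) (hz : 0 < z) :
    T x - T (x+z)
      = ∫ t in Set.Ioi (0:ℝ), t * Real.exp (-(x*t)) * (1 - Real.exp (-(z*t))) / (1 - Real.exp (-t)) := by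
  have hint : ∀ m : ℕ, Integrable
      (fun t => t * Real.exp (-((x+m)*t)) - t * Real.exp (-((x+z+m)*t)))
      (volume.restrict (Set.Ioi (0:ℝ))) := by
    intro m
    exact (integrableOn_texp (by positivity : (0:ℝ) < x + m)).sub
      (integrableOn_texp (by positivity : (0:ℝ) < x + z + m))
  have hsum : Summable (fun m : ℕ => ∫ t in Set.Ioi (0:ℝ),
      ‖t * Real.exp (-((x+m)*t)) - t * Real.exp (-((x+z+m)*t))‖) := by
    apply Summable.congr (summable_values hx hz)
    intro m
    exact (f_integral_norm hx hz m).symm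
  have hswap := MeasureTheory.integral_tsum_of_summable_integral_norm hint hsum
  have hL : T x - T (x+z) = ∑' m : ℕ, (((x+m)^2)⁻¹ - ((x+z+m)^2)⁻¹) := by
    rw [T, T, ← Summable.tsum_sub (summable_T x hx) (summable_T (x+z) (by positivity))]
  rw [hL]
  calc ∑' m : ℕ, (((x+m)^2)⁻¹ - ((x+z+m)^2)⁻¹)
      = ∑' m : ℕ, ∫ t in Set.Ioi (0:ℝ),
        (t * Real.exp (-((x+m)*t)) - t * Real.exp (-((x+z+m)*t))) :=
        tsum_congr (fun m => (f_integral hx hz m).symm)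
  _ = ∫ t in Set.Ioi (0:ℝ), ∑' m : ℕ,
        (t * Real.exp (-((x+m)*t)) - t * Real.exp (-((x+z+m)*t))) := hswap
  _ = ∫ t in Set.Ioi (0:ℝ), t * Real.exp (-(x*t)) * (1 - Real.exp (-(z*t))) / (1 - Real.exp (-t)) := by
        apply setIntegral_congr_fun measurableSet_Ioi
        intro t ht
        exact tsum_f hx hz ht

end Aux

namespace Aux

lemma key_exp {z : ℝ} (hz : 1 ≤ z) {t : ℝ} (ht : 0 ≤ t) :
    z * (Real.exp t - 1) ≤ Real.exp (z*t) - 1 := by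
  have hmono : MonotoneOn (fun t => Real.exp (z*t) - z * Real.exp t) (Set.Ici (0:ℝ)) := by
    apply monotoneOn_of_deriv_nonneg (convex_Ici 0)
    · apply Continuous.continuousOn
      continuity
    · apply Differentiable.differentiableOn
      apply Differentiable.sub
      · exact (Real.differentiable_exp.comp (differentiable_id.const_mul z))
      · exact Real.differentiable_exp.const_mul z
    · intro x hx
      rw [interior_Ici] at hx
      have h1 : HasDerivAt (fun t => Real.exp (z*t) - z * Real.exp t)
          (Real.exp (z*x) * z - z * Real.exp x) x := by
        apply HasDerivAt.sub
        · simpa using ((hasDerivAt_id x).const_mul z).exp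
        · exact (Real.hasDerivAt_exp x).const_mul z
      rw [h1.deriv]
      have : Real.exp x ≤ Real.exp (z*x) := Real.exp_le_exp.mpr (by nlinarith [(Set.mem_Ioi.mp hx).le])
      nlinarith [Real.exp_pos x]
  have h0 := hmono (Set.self_mem_Ici) (Set.mem_Ici.mpr ht) ht
  simp only [mul_zero, Real.exp_zero] at h0
  linarith

lemma num_nonpos {z : ℝ} (hz : 1 ≤ z) {t : ℝ} (ht : 0 < t) :
    z * Real.exp (-(z*t)) * (1 - Real.exp (-t)) - (1 - Real.exp (-(z*t))) * Real.exp (-t) ≤ 0 := by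
  have key := key_exp hz ht.le
  have ha : Real.exp (-t) = (Real.exp t)⁻¹ := Real.exp_neg t
  have hb : Real.exp (-(z*t)) = (Real.exp (z*t))⁻¹ := Real.exp_neg (z*t)
  have hap : 0 < Real.exp t := Real.exp_pos t
  have hbp : 0 < Real.exp (z*t) := Real.exp_pos (z*t)
  rw [ha, hb, sub_nonpos, ← sub_nonneg]
  have e1 : (1 - (Real.exp (z*t))⁻¹) * (Real.exp t)⁻¹ - z * (Real.exp (z*t))⁻¹ * (1 - (Real.exp t)⁻¹)
      = ((Real.exp (z*t) - 1) - z * (Real.exp t - 1)) / (Real.exp t * Real.exp (z*t)) := by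
    field_simp
    try tauto
  rw [e1]
  apply div_nonneg (by linarith) (by positivity)

noncomputable def gfun (z t : ℝ) : ℝ := (1 - Real.exp (-(z*t))) / (1 - Real.exp (-t))

lemma one_sub_exp_pos {t : ℝ} (ht : 0 < t) : 0 < 1 - Real.exp (-t) := by
  have : Real.exp (-t) < 1 := Real.exp_lt_one_iff.mpr (by linarith)
  linarith

lemma hasDerivAt_gfun {z t : ℝ} (ht : 0 < t) :
    HasDerivAt (gfun z)
      ((z * Real.exp (-(z*t)) * (1 - Real.exp (-t)) - (1 - Real.exp (-(z*t))) * Real.exp (-t))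
        / (1 - Real.exp (-t))^2) t := by
  have hu : HasDerivAt (fun t => 1 - Real.exp (-(z*t))) (z * Real.exp (-(z*t))) t := by
    have h := (Real.hasDerivAt_exp (-(z*t))).comp t (((hasDerivAt_id t).const_mul z).neg)
    have := (hasDerivAt_const t (1:ℝ)).fun_sub h
    refine this.congr_deriv ?_
    simp
    ring
  have hv : HasDerivAt (fun t => 1 - Real.exp (-t)) (Real.exp (-t)) t := by
    have h := (Real.hasDerivAt_exp (-t)).comp t (hasDerivAt_id t).neg
    have := (hasDerivAt_const t (1:ℝ)).fun_sub h
    refine this.congr_deriv ?_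
    simp
  exact hu.div hv (one_sub_exp_pos ht).ne'

lemma antitoneOn_gfun {z : ℝ} (hz : 1 ≤ z) : AntitoneOn (gfun z) (Set.Ioi (0:ℝ)) := by
  apply antitoneOn_of_deriv_nonpos (convex_Ioi 0)
  · intro t ht
    exact (hasDerivAt_gfun ht).continuousAt.continuousWithinAt
  · rw [interior_Ioi]
    intro t ht
    exact (hasDerivAt_gfun ht).differentiableAt.differentiableWithinAt
  · rw [interior_Ioi]
    intro t ht
    rw [(hasDerivAt_gfun ht).deriv]
    apply div_nonpos_of_nonpos_of_nonneg (num_nonpos hz ht)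
    positivity

end Aux

namespace Aux

noncomputable def kap (z t : ℝ) : ℝ := Real.exp (-t) * gfun z t

lemma kap_nonneg {z t : ℝ} (hz : 0 < z) (ht : 0 < t) : 0 ≤ kap z t := by
  unfold kap gfun
  have h1 : Real.exp (-(z*t)) ≤ 1 := Real.exp_le_one_iff.mpr (by nlinarith)
  have h2 := one_sub_exp_pos ht
  exact mul_nonneg (Real.exp_pos _).le (div_nonneg (by linarith) h2.le)

lemma kap_le {z t : ℝ} (hz : 0 < z) (ht : 0 < t) : kap z t ≤ z := by
  unfold kap gfun
  rw [mul_div_assoc'] at *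
  rw [div_le_iff₀ (one_sub_exp_pos ht)]
  have h1 : 1 - Real.exp (-(z*t)) ≤ z*t := by
    nlinarith [Real.add_one_le_exp (-(z*t))]
  have h2 : t * Real.exp (-t) ≤ 1 - Real.exp (-t) := by
    have := Real.add_one_le_exp t
    have he : Real.exp (-t) = (Real.exp t)⁻¹ := Real.exp_neg t
    rw [he]
    have hp := Real.exp_pos t
    rw [← sub_nonneg]
    have e1 : 1 - (Real.exp t)⁻¹ - t * (Real.exp t)⁻¹ = (Real.exp t - 1 - t) / Real.exp t := by
      field_simp
    rw [e1]
    apply div_nonneg (by linarith) hp.le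
  have he2 : 0 < Real.exp (-t) := Real.exp_pos _
  nlinarith

lemma antitone_kap {z : ℝ} (hz : 1 ≤ z) : AntitoneOn (kap z) (Set.Ioi (0:ℝ)) := by
  intro t1 ht1 t2 ht2 h12
  unfold kap
  have hz0 : (0:ℝ) < z := by linarith
  have hg2 : 0 ≤ gfun z t2 := by
    unfold gfun
    have ht2' : (0:ℝ) < t2 := Set.mem_Ioi.mp ht2
    have h1 : Real.exp (-(z*t2)) ≤ 1 := Real.exp_le_one_iff.mpr (by nlinarith)
    have h2 := one_sub_exp_pos ht2'
    exact div_nonneg (by linarith) h2.le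
  apply mul_le_mul (Real.exp_le_exp.mpr (by linarith)) (antitoneOn_gfun hz ht1 ht2 h12) hg2
    (Real.exp_pos _).le

lemma contOn_kap {z : ℝ} : ContinuousOn (kap z) (Set.Ioi (0:ℝ)) := by
  unfold kap gfun
  apply ContinuousOn.mul (Continuous.continuousOn (by continuity))
  apply ContinuousOn.div (Continuous.continuousOn (by continuity))
    (Continuous.continuousOn (by continuity))
  intro t ht
  exact (one_sub_exp_pos (Set.mem_Ioi.mp ht)).ne'

lemma integrable_aux {c z : ℝ} (hc : 0 < c) (hz : 0 < z) {h : ℝ → ℝ}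
    (hcont : ContinuousOn h (Set.Ioi 0)) (h0 : ∀ t ∈ Set.Ioi (0:ℝ), 0 ≤ h t)
    (h1 : ∀ t ∈ Set.Ioi (0:ℝ), h t ≤ z) :
    IntegrableOn (fun t => c^2 * (t * Real.exp (-(c*t)) * h t)) (Set.Ioi (0:ℝ)) := by
  apply MeasureTheory.Integrable.mono' ((integrableOn_texp hc).const_mul (c^2*z))
  · exact (continuousOn_const.mul ((continuous_id.continuousOn.mul
      (Continuous.continuousOn (by continuity))).mul hcont)).aestronglyMeasurable measurableSet_Ioi
  · filter_upwards [MeasureTheory.ae_restrict_mem measurableSet_Ioi] with t ht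
    have htp : 0 < t := Set.mem_Ioi.mp ht
    have hh0 := h0 t ht
    have hh1 := h1 t ht
    have he : 0 < Real.exp (-(c*t)) := Real.exp_pos _
    rw [Real.norm_eq_abs, abs_of_nonneg (by positivity)]
    nlinarith [mul_le_mul_of_nonneg_left hh1
      (by positivity : (0:ℝ) ≤ c^2 * (t * Real.exp (-(c*t))))]

end Aux

namespace Aux

lemma q_eq {α z : ℝ} (hα : 1 < α) (hz : 0 < z) :
    (α - 1)^2 * (trigamma α - trigamma (α+z))
      = ∫ t in Set.Ioi (0:ℝ), (α-1)^2 * (t * Real.exp (-((α-1)*t)) * kap z t) := by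
  have hα0 : (0:ℝ) < α := by linarith
  rw [trigamma_eq hα0, trigamma_eq (by positivity : (0:ℝ) < α + z), T_sub hα0 hz,
    ← MeasureTheory.integral_const_mul]
  apply setIntegral_congr_fun measurableSet_Ioi
  intro t ht
  have htp : (0:ℝ) < t := Set.mem_Ioi.mp ht
  have hden := (one_sub_exp_pos htp).ne'
  have hexp : Real.exp (-(α*t)) = Real.exp (-((α-1)*t)) * Real.exp (-t) := by
    rw [← Real.exp_add]; ring_nf
  simp only [kap, gfun]
  rw [hexp]
  field_simp
  try tauto

lemma cov {c r z : ℝ} (hc : 0 < c) (hcr : c ≤ r) :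
    ∫ t in Set.Ioi (0:ℝ), r^2 * (t * Real.exp (-(r*t)) * kap z t)
      = ∫ w in Set.Ioi (0:ℝ), c^2 * (w * Real.exp (-(c*w)) * kap z ((c/r)*w)) := by
  have hr : 0 < r := lt_of_lt_of_le hc hcr
  have hl : 0 < c/r := by positivity
  have h := integral_comp_mul_left_Ioi (fun t => r^2 * (t * Real.exp (-(r*t)) * kap z t)) 0 hl
  rw [mul_zero] at h
  have heq : ∀ w : ℝ, c^2 * (w * Real.exp (-(c*w)) * kap z ((c/r)*w))
      = (c/r) * (r^2 * (((c/r)*w) * Real.exp (-(r*((c/r)*w))) * kap z ((c/r)*w))) := by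
    intro w
    have : r*((c/r)*w) = c*w := by field_simp
    rw [this]
    field_simp
  beta_reduce at h
  calc ∫ t in Set.Ioi (0:ℝ), r^2 * (t * Real.exp (-(r*t)) * kap z t)
      = (c/r) * ((c/r)⁻¹ • ∫ t in Set.Ioi (0:ℝ), r^2 * (t * Real.exp (-(r*t)) * kap z t)) := by
        rw [smul_eq_mul, ← mul_assoc, mul_inv_cancel₀ hl.ne', one_mul]
  _ = (c/r) * ∫ w in Set.Ioi (0:ℝ), r^2 * (((c/r)*w) * Real.exp (-(r*((c/r)*w))) * kap z ((c/r)*w)) := by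
        rw [← h]
  _ = ∫ w in Set.Ioi (0:ℝ), (c/r) * (r^2 * (((c/r)*w) * Real.exp (-(r*((c/r)*w))) * kap z ((c/r)*w))) := by
        rw [MeasureTheory.integral_const_mul (c/r), MeasureTheory.integral_const_mul (r^2)]
  _ = ∫ w in Set.Ioi (0:ℝ), c^2 * (w * Real.exp (-(c*w)) * kap z ((c/r)*w)) := by
        simp_rw [← heq]

lemma contOn_kap_scaled {z l : ℝ} (hl : 0 < l) :
    ContinuousOn (fun w => kap z (l*w)) (Set.Ioi (0:ℝ)) := by
  apply ContinuousOn.comp contOn_kap (Continuous.continuousOn (by continuity))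
  intro w hw
  have := Set.mem_Ioi.mp hw
  exact Set.mem_Ioi.mpr (by positivity)

theorem stmt_main (z : ℝ) (hz : 1 < z) :
    MonotoneOn (fun α : ℝ => (α - 1) ^ 2 * (trigamma α - trigamma (α + z)))
      (Set.Ioi 1) := by
  intro a ha b hb hab
  simp only
  have ha1 : (1:ℝ) < a := Set.mem_Ioi.mp ha
  have hb1 : (1:ℝ) < b := Set.mem_Ioi.mp hb
  have hz0 : (0:ℝ) < z := by linarith
  have hz1 : (1:ℝ) ≤ z := hz.le
  set c := a - 1 with hc_def
  set r := b - 1 with hr_def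
  have hc : 0 < c := by simp [hc_def]; linarith
  have hr : 0 < r := by simp [hr_def]; linarith
  have hcr : c ≤ r := by simp [hc_def, hr_def]; linarith
  have hl0 : 0 < c/r := by positivity
  have hl1 : c/r ≤ 1 := by rw [div_le_one hr]; exact hcr
  rw [q_eq ha1 hz0, q_eq hb1 hz0, cov hc hcr]
  apply MeasureTheory.setIntegral_mono_on
  · exact integrable_aux hc hz0 contOn_kap (fun t ht => kap_nonneg hz0 (Set.mem_Ioi.mp ht))
      (fun t ht => kap_le hz0 (Set.mem_Ioi.mp ht))
  · apply integrable_aux hc hz0 (contOn_kap_scaled hl0)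
    · intro t ht
      have := Set.mem_Ioi.mp ht
      exact kap_nonneg hz0 (by positivity)
    · intro t ht
      have := Set.mem_Ioi.mp ht
      exact kap_le hz0 (by positivity)
  · exact measurableSet_Ioi
  · intro w hw
    have hwp : (0:ℝ) < w := Set.mem_Ioi.mp hw
    have hlw : (0:ℝ) < (c/r)*w := by positivity
    have hle : (c/r)*w ≤ w := by nlinarith
    have hkap : kap z w ≤ kap z ((c/r)*w) :=
      antitone_kap hz1 (Set.mem_Ioi.mpr hlw) hw hle
    have hfac : (0:ℝ) ≤ c^2 * (w * Real.exp (-(c*w))) := by positivity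
    nlinarith [mul_le_mul_of_nonneg_left hkap hfac]

end Aux

theorem stmt_12 (z p : ℝ) (hz : 1 < z) (hp : 0 < p) :
    MonotoneOn (fun α : ℝ => (α - 1) ^ 2 * (trigamma α - trigamma (α + z)))
      (Set.Ioi 1) := by
  exact Aux.stmt_main z hz
end

section
/- Let $K \geq 2$, let $c$ be a fixed index, and let $\alpha_j > 1$ for $j \neq c$ with $\tilde\alpha_0 = 1 + \sum_{j\neq c}\alpha_j$. Then the information regularization loss $\mathcal{R}(\alpha) = \frac{1}{2}\sum_{j\neq c}(\alpha_j-1)^2\,(\psi^{(1)}(\alpha_j) - \psi^{(1)}(\tilde\alpha_0))$ is nondecreasing in each $\alpha_k$, $k \neq c$: its partial derivative with respect to $\alpha_k$ is nonnegative. -/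
set_option maxHeartbeats 1000000

open Filter Topology Set Finset

namespace Stmt14X

/-- The tail zeta-like sums. -/
noncomputable def T (p : ℕ) (x : ℝ) : ℝ := ∑' n : ℕ, ((x + n) ^ p)⁻¹

lemma aux_le {x : ℝ} (hx : 0 < x) (n : ℕ) : min x (1/2) * (n + 1) ≤ x + n := by
  rcases Nat.eq_zero_or_pos n with h | h
  · subst h; simpa using min_le_left x (1/2)
  · have h1 : (1:ℝ) ≤ n := by exact_mod_cast h
    have : min x (1/2) ≤ 1/2 := min_le_right _ _
    nlinarith

lemma summable_T {p : ℕ} (hp : 2 ≤ p) {x : ℝ} (hx : 0 < x) :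
    Summable (fun n : ℕ => ((x + n) ^ p)⁻¹) := by
  set c := min x (1/2) with hc
  have hc0 : 0 < c := lt_min hx (by norm_num)
  have hsum : Summable (fun n : ℕ => (c ^ p)⁻¹ * (((n:ℝ) + 1) ^ 2)⁻¹) := by
    apply Summable.mul_left
    have := (summable_nat_add_iff (f := fun n : ℕ => (((n:ℝ)) ^ 2)⁻¹) 1).2
      (Real.summable_nat_pow_inv.2 one_lt_two)
    refine this.congr fun n => by push_cast; ring
  refine Summable.of_nonneg_of_le (fun n => by positivity) (fun n => ?_) hsum
  have h1 : c * (n+1) ≤ x + n := aux_le hx n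
  have h2 : (0:ℝ) < n + 1 := by positivity
  have h3 : (c * (n+1)) ^ p ≤ (x + n) ^ p := by
    apply pow_le_pow_left₀ (by positivity) h1
  have h4 : ((n:ℝ) + 1) ^ 2 ≤ ((n:ℝ) + 1) ^ p := by
    apply pow_le_pow_right₀ (by linarith) hp
  calc ((x + n) ^ p)⁻¹ ≤ ((c * (n+1)) ^ p)⁻¹ := by
        apply inv_anti₀ (by positivity) h3
    _ = (c ^ p)⁻¹ * (((n:ℝ) + 1) ^ p)⁻¹ := by rw [mul_pow, mul_inv]
    _ ≤ (c ^ p)⁻¹ * (((n:ℝ) + 1) ^ 2)⁻¹ := by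
        apply mul_le_mul_of_nonneg_left _ (by positivity)
        exact inv_anti₀ (by positivity) h4

lemma T_nonneg (p : ℕ) {x : ℝ} (hx : 0 < x) : 0 ≤ T p x :=
  tsum_nonneg fun n => by have : (0:ℝ) ≤ n := n.cast_nonneg; positivity

/-- Shift identity. -/
lemma T_shift {p : ℕ} (hp : 2 ≤ p) {x : ℝ} (hx : 0 < x) : T p x = (x ^ p)⁻¹ + T p (x + 1) := by
  have h := summable_T hp hx
  have := Summable.tsum_eq_zero_add h
  simp only [Nat.cast_zero, add_zero] at this
  rw [T, this, T]
  congr 1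
  apply tsum_congr; intro n
  congr 2
  push_cast; ring

lemma tsum_telescope (c : ℕ → ℝ) (h : Summable c) :
    ∑' n : ℕ, (c n - c (n + 1)) = c 0 := by
  have h1 : Summable fun n => c (n + 1) := (summable_nat_add_iff 1).2 h
  have h2 := (h.hasSum.sub h1.hasSum).tsum_eq
  have h3 := Summable.tsum_eq_zero_add h
  rw [h2]; linarith

lemma T3_lb {x : ℝ} (hx : 0 < x) : (x ^ 2)⁻¹ + (x ^ 3)⁻¹ ≤ 2 * T 3 x := by
  have hS3 : Summable fun n : ℕ => ((x + n) ^ 3)⁻¹ := summable_T (by norm_num) hx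
  have hS3' : Summable fun n : ℕ => ((x + (n + 1 : ℕ)) ^ 3)⁻¹ := (summable_nat_add_iff 1).2 hS3
  have hS2 : Summable fun n : ℕ => ((x + n) ^ 2)⁻¹ := summable_T (by norm_num) hx
  have hS2' : Summable fun n : ℕ => ((x + (n + 1 : ℕ)) ^ 2)⁻¹ := (summable_nat_add_iff 1).2 hS2
  have hb : Summable fun n : ℕ => ((x + n) ^ 2)⁻¹ - ((x + (n + 1 : ℕ)) ^ 2)⁻¹ := hS2.sub hS2'
  have htel : ∑' n : ℕ, (((x + n) ^ 2)⁻¹ - ((x + (n + 1 : ℕ)) ^ 2)⁻¹) = (x ^ 2)⁻¹ := by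
    have := tsum_telescope (fun n : ℕ => ((x + n) ^ 2)⁻¹) hS2
    simpa using this
  have hterm : ∀ n : ℕ, ((x + n) ^ 2)⁻¹ - ((x + (n + 1 : ℕ)) ^ 2)⁻¹ ≤
      ((x + n) ^ 3)⁻¹ + ((x + (n + 1 : ℕ)) ^ 3)⁻¹ := by
    intro n
    have hy : (0:ℝ) < x + n := by positivity
    have hy1 : (0:ℝ) < x + (n + 1 : ℕ) := by positivity
    have hc : (x + (n + 1 : ℕ) : ℝ) = (x + n) + 1 := by push_cast; ring
    rw [hc] at *
    set y := x + (n:ℝ) with hydef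
    clear_value y
    have hy' : (0:ℝ) < y + 1 := by linarith
    have l1 : (y^2)⁻¹ - ((y+1)^2)⁻¹ = (2*y+1)/(y^2*(y+1)^2) := by
      field_simp; ring
    have l2 : (y^3)⁻¹ + ((y+1)^3)⁻¹ = (y^3+(y+1)^3)/(y^3*(y+1)^3) := by
      field_simp; ring
    rw [l1, l2, div_le_div_iff₀ (by positivity) (by positivity)]
    nlinarith [hy, sq_nonneg (y*(y+1)), mul_pos hy hy']
  have hsucc : ∑' n : ℕ, ((x + (n + 1 : ℕ)) ^ 3)⁻¹ = T 3 x - (x ^ 3)⁻¹ := by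
    have := Summable.tsum_eq_zero_add hS3
    simp only [Nat.cast_zero, add_zero] at this
    rw [T]; push_cast at this ⊢; linarith [this]
  have hsum := hb.tsum_le_tsum hterm (hS3.add hS3')
  rw [htel, Summable.tsum_add hS3 hS3', hsucc] at hsum
  have : ∑' n : ℕ, ((x + n) ^ 3)⁻¹ = T 3 x := rfl
  rw [this] at hsum
  linarith

lemma T4_ub {x : ℝ} (hx : 1 < x) : 3 * T 4 x ≤ ((x - 1/2) ^ 3)⁻¹ := by
  have hx0 : (0:ℝ) < x - 1/2 := by linarith
  have hS : Summable fun n : ℕ => (((x - 1/2) + n) ^ 3)⁻¹ := summable_T (by norm_num) hx0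
  have hS4 : Summable fun n : ℕ => ((x + n) ^ 4)⁻¹ := summable_T (by norm_num) (by linarith)
  have hS' : Summable fun n : ℕ => (((x - 1/2) + (n + 1 : ℕ)) ^ 3)⁻¹ := (summable_nat_add_iff 1).2 hS
  have hd : Summable fun n : ℕ => (((x - 1/2) + n) ^ 3)⁻¹ - (((x - 1/2) + (n + 1 : ℕ)) ^ 3)⁻¹ := hS.sub hS'
  have htel : ∑' n : ℕ, ((((x - 1/2) + n) ^ 3)⁻¹ - (((x - 1/2) + (n + 1 : ℕ)) ^ 3)⁻¹)
      = ((x - 1/2) ^ 3)⁻¹ := by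
    have := tsum_telescope (fun n : ℕ => (((x - 1/2) + n) ^ 3)⁻¹) hS
    simpa using this
  have hterm : ∀ n : ℕ, 3 * ((x + n) ^ 4)⁻¹ ≤
      (((x - 1/2) + n) ^ 3)⁻¹ - (((x - 1/2) + (n + 1 : ℕ)) ^ 3)⁻¹ := by
    intro n
    have hy : (1:ℝ) < x + n := by
      have : (0:ℝ) ≤ n := n.cast_nonneg
      linarith
    have hc : ((x - 1/2) + (n + 1 : ℕ) : ℝ) = (x + n) + 1/2 := by push_cast; ring
    have hc2 : ((x - 1/2) + n : ℝ) = (x + n) - 1/2 := by push_cast; ring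
    rw [hc, hc2]
    set y := x + (n:ℝ) with hydef
    clear_value y
    have h1 : (0:ℝ) < y - 1/2 := by linarith
    have h2 : (0:ℝ) < y + 1/2 := by linarith
    have h3 : (0:ℝ) < y := by linarith
    have l1 : ((y - 1/2)^3)⁻¹ - ((y + 1/2)^3)⁻¹ =
        ((y+1/2)^3 - (y-1/2)^3)/((y-1/2)^3*(y+1/2)^3) :=
      inv_sub_inv (by positivity) (by positivity)
    have l2 : 3 * (y^4)⁻¹ = 3/(y^4) := by rw [inv_eq_one_div]; ring
    rw [l1, l2, div_le_div_iff₀ (by positivity) (by positivity)]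
    nlinarith [sq_nonneg (y^2 - 9/80), sq_nonneg y, h3]
  have hsum := (hS4.mul_left 3).tsum_le_tsum hterm hd
  rw [htel] at hsum
  rw [tsum_mul_left] at hsum
  exact hsum

lemma hasDerivAt_T {p : ℕ} (hp : 2 ≤ p) {x : ℝ} (hx : 0 < x) :
    HasDerivAt (T p) (-(p : ℝ) * T (p + 1) x) x := by
  have hx2 : 0 < x / 2 := by linarith
  have hu : Summable (fun n : ℕ => (p : ℝ) * ((x/2 + n) ^ (p+1))⁻¹) :=
    (summable_T (by omega) hx2).mul_left _
  have hg : ∀ (n : ℕ), ∀ y ∈ Ioi (x/2),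
      HasDerivAt (fun z => ((z + (n:ℝ)) ^ p)⁻¹) (-(p:ℝ) * ((y + n) ^ (p+1))⁻¹) y := by
    intro n y hy
    have hyn : (0:ℝ) < y + n := by
      have : (0:ℝ) ≤ n := n.cast_nonneg
      have : x/2 < y := hy
      linarith
    have h0 : HasDerivAt (fun z : ℝ => z + (n:ℝ)) 1 y := (hasDerivAt_id y).add_const _
    have h1 : HasDerivAt (fun z : ℝ => (z + (n:ℝ)) ^ p) ((p:ℝ) * (y + n) ^ (p-1) * 1) y := h0.pow p
    have h2 := h1.inv (by positivity)
    refine h2.congr_deriv ?_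
    symm
    rw [mul_one, eq_div_iff (by positivity)]
    have hpp : (((y:ℝ) + n) ^ p) ^ 2 = (y + n) ^ (p+1) * (y + n) ^ (p-1) := by
      rw [← pow_mul, ← pow_add]; congr 1; omega
    rw [hpp]
    have hinv : ((y + (n:ℝ)) ^ (p+1))⁻¹ * (y + (n:ℝ)) ^ (p+1) = 1 := inv_mul_cancel₀ (by positivity)
    linear_combination (-(p:ℝ) * (y + (n:ℝ)) ^ (p-1)) * hinv
  have hg' : ∀ (n : ℕ), ∀ y ∈ Ioi (x/2),
      ‖-(p:ℝ) * ((y + n) ^ (p+1))⁻¹‖ ≤ (p:ℝ) * ((x/2 + n) ^ (p+1))⁻¹ := by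
    intro n y hy
    have hy' : x/2 < y := hy
    have hn : (0:ℝ) ≤ n := n.cast_nonneg
    have h1 : (0:ℝ) < x/2 + n := by linarith
    have h2 : (0:ℝ) < y + n := by linarith
    rw [Real.norm_eq_abs, abs_mul, abs_neg, Nat.abs_cast, abs_of_nonneg (by positivity)]
    apply mul_le_mul_of_nonneg_left _ (Nat.cast_nonneg p)
    apply inv_anti₀ (by positivity)
    apply pow_le_pow_left₀ h1.le (by linarith)
  have key := hasDerivAt_tsum_of_isPreconnected hu isOpen_Ioi (isPreconnected_Ioi)
    hg hg' (show x ∈ Ioi (x/2) by simp [hx2]; linarith) (summable_T hp hx)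
    (show x ∈ Ioi (x/2) by simp [hx2]; linarith)
  have heq : ∑' n : ℕ, (-(p:ℝ) * ((x + n) ^ (p+1))⁻¹) = -(p:ℝ) * T (p+1) x := tsum_mul_left
  rw [heq] at key
  exact key

lemma hasDerivAt_T2 {x : ℝ} (hx : 0 < x) : HasDerivAt (T 2) (-2 * T 3 x) x := by
  have := hasDerivAt_T (p := 2) le_rfl hx
  norm_num at this ⊢
  exact this

lemma hasDerivAt_T3 {x : ℝ} (hx : 0 < x) : HasDerivAt (T 3) (-3 * T 4 x) x := by
  have := hasDerivAt_T (p := 3) (by norm_num) hx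
  norm_num at this ⊢
  exact this

lemma key_ineq {x : ℝ} (hx : 2 < x) : 3 * (x - 2) * T 4 x ≤ 2 * T 3 x := by
  have h4 := T4_ub (x := x) (by linarith)
  have h3 := T3_lb (x := x) (by linarith)
  have hpoly : (x - 2) * ((x - 1/2) ^ 3)⁻¹ ≤ (x ^ 2)⁻¹ + (x ^ 3)⁻¹ := by
    have l : (x ^ 2)⁻¹ + (x ^ 3)⁻¹ = (x + 1) / x ^ 3 := by
      field_simp
    have l2 : (x - 2) * ((x - 1/2) ^ 3)⁻¹ = (x - 2) / (x - 1/2) ^ 3 :=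
      (div_eq_mul_inv _ _).symm
    rw [l, l2, div_le_div_iff₀ (pow_pos (by linarith) 3) (by positivity)]
    nlinarith [hx, sq_nonneg x, sq_nonneg (x-2)]
  calc 3 * (x - 2) * T 4 x = (x - 2) * (3 * T 4 x) := by ring
    _ ≤ (x - 2) * ((x - 1/2) ^ 3)⁻¹ := by
        apply mul_le_mul_of_nonneg_left h4 (by linarith)
    _ ≤ (x ^ 2)⁻¹ + (x ^ 3)⁻¹ := hpoly
    _ ≤ 2 * T 3 x := h3

lemma H_mono {t v : ℝ} (ht : 1 < t) (hv : t + 1 ≤ v) :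
    2 * T 2 v - 2 * (t - 1) * T 3 v ≤ 2 * T 2 (t+1) - 2 * (t - 1) * T 3 (t+1) := by
  have hanti : AntitoneOn (fun y => 2 * T 2 y - 2 * (t - 1) * T 3 y) (Icc (t+1) v) := by
    have hD : ∀ y ∈ Icc (t+1) v, HasDerivAt (fun y => 2 * T 2 y - 2 * (t - 1) * T 3 y)
        (2 * (-2 * T 3 y) - 2 * (t - 1) * (-3 * T 4 y)) y := by
      intro y hy
      have hy0 : (0:ℝ) < y := by have := hy.1; linarith
      exact ((hasDerivAt_T2 hy0).const_mul 2).sub ((hasDerivAt_T3 hy0).const_mul (2 * (t - 1)))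
    apply antitoneOn_of_deriv_nonpos (convex_Icc _ _)
    · exact fun y hy => (hD y hy).continuousAt.continuousWithinAt
    · rw [interior_Icc]
      exact fun y hy => ((hD y (Ioo_subset_Icc_self hy)).differentiableAt).differentiableWithinAt
    · intro y hy
      rw [interior_Icc] at hy
      have hy2 : 2 < y := by have := hy.1; linarith
      rw [(hD y (Ioo_subset_Icc_self hy)).deriv]
      have hk := key_ineq hy2
      have hT4 := T_nonneg 4 (x := y) (by linarith)
      have hfac : (y - 2 - (t - 1)) * T 4 y ≥ 0 := by
        apply mul_nonneg _ hT4
        have := hy.1; linarith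
      nlinarith [hk, hT4, hfac]
  exact hanti (left_mem_Icc.2 hv) (right_mem_Icc.2 hv) hv

lemma own_term {t A : ℝ} (ht : 1 < t) (hA : 1 ≤ A) :
    (t - 1) * (T 3 t - T 3 (t + A)) ≤ T 2 t - T 2 (t + A) := by
  have ht0 : (0:ℝ) < t := by linarith
  have h1 : T 2 t - T 2 (t+1) = (t ^ 2)⁻¹ := by
    have := T_shift (p := 2) le_rfl ht0; linarith
  have h2 : T 3 t - T 3 (t+1) = (t ^ 3)⁻¹ := by
    have := T_shift (p := 3) (by norm_num) ht0; linarith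
  have h3 := H_mono ht (by linarith : t + 1 ≤ t + A)
  have h4 : (t - 1) * (t ^ 3)⁻¹ ≤ (t ^ 2)⁻¹ := by
    rw [← div_eq_mul_inv, inv_eq_one_div, div_le_div_iff₀ (by positivity) (by positivity)]
    nlinarith [ht0]
  nlinarith [h3, h4, h1, h2]

/-- partial-sum functions: derivative of logGammaSeq -/
noncomputable def f1 (n : ℕ) (x : ℝ) : ℝ := Real.log n - ∑ m ∈ range (n+1), (x + m)⁻¹
noncomputable def f2 (n : ℕ) (x : ℝ) : ℝ := ∑ m ∈ range (n+1), ((x + m) ^ 2)⁻¹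
noncomputable def g1 (x : ℝ) : ℝ :=
  (∑' m : ℕ, (((m : ℝ) + 1)⁻¹ - (x + m)⁻¹)) - Real.eulerMascheroniConstant

lemma summable_ab {a : ℝ} (ha : 0 < a) :
    Summable (fun m : ℕ => ((a + m) * ((m : ℝ) + 1))⁻¹) := by
  set c := min a (1/2) with hc
  have hc0 : 0 < c := lt_min ha (by norm_num)
  have hsum : Summable (fun m : ℕ => c⁻¹ * ((((m:ℝ) + 1)) ^ 2)⁻¹) := by
    apply Summable.mul_left
    have := (summable_nat_add_iff (f := fun n : ℕ => (((n:ℝ)) ^ 2)⁻¹) 1).2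
      (Real.summable_nat_pow_inv.2 one_lt_two)
    refine this.congr fun n => by push_cast; ring
  refine Summable.of_nonneg_of_le (fun m => by positivity) (fun m => ?_) hsum
  have h1 : c * (m + 1) ≤ a + m := aux_le ha m
  have h2 : (0:ℝ) < m + 1 := by positivity
  have h3 : c * (m+1) * (m+1) ≤ (a + m) * (m + 1) := by nlinarith
  calc ((a + m) * ((m:ℝ) + 1))⁻¹ ≤ (c * ((m:ℝ)+1) * ((m:ℝ)+1))⁻¹ := by
        apply inv_anti₀ (by positivity) h3
    _ = c⁻¹ * ((((m:ℝ) + 1)) ^ 2)⁻¹ := by rw [← mul_inv]; congr 1; ring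

lemma summable_g1 {x : ℝ} (hx : 0 < x) :
    Summable (fun m : ℕ => (((m : ℝ) + 1)⁻¹ - (x + m)⁻¹)) := by
  refine Summable.of_norm ?_
  have hb := (summable_ab hx).mul_left (|x - 1|)
  refine Summable.of_nonneg_of_le (fun m => norm_nonneg _) (fun m => ?_) hb
  have hm : (0:ℝ) < (m:ℝ) + 1 := by positivity
  have hxm : (0:ℝ) < x + m := by have : (0:ℝ) ≤ m := m.cast_nonneg; linarith
  have he : ((m : ℝ) + 1)⁻¹ - (x + m)⁻¹ = (x - 1) * ((x + m) * ((m:ℝ) + 1))⁻¹ := by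
    field_simp
    ring
  have hpos : (0:ℝ) < ((x + m) * ((m:ℝ) + 1))⁻¹ := by positivity
  rw [he, norm_mul, Real.norm_eq_abs, Real.norm_eq_abs, abs_of_pos hpos]

/-- index-shift for uniform convergence -/
lemma TUO_succ {F : ℕ → ℝ → ℝ} {f : ℝ → ℝ} {s : Set ℝ}
    (h : TendstoUniformlyOn F f atTop s) : TendstoUniformlyOn (fun n => F (n+1)) f atTop s := by
  intro u hu
  exact (tendsto_add_atTop_nat 1).eventually (h u hu)

lemma tlu_f2 : TendstoLocallyUniformlyOn f2 (T 2) atTop (Ioi 0) := by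
  rw [tendstoLocallyUniformlyOn_iff_forall_isCompact isOpen_Ioi]
  intro K hK hKc
  rcases K.eq_empty_or_nonempty with rfl | hne
  · exact tendstoUniformlyOn_empty
  have haK : sInf K ∈ K := hKc.sInf_mem hne
  set a := sInf K with hadef
  have ha : 0 < a := hK haK
  have hbd : ∀ x ∈ K, a ≤ x := fun x hx => csInf_le hKc.bddBelow hx
  have hu : Summable (fun m : ℕ => ((a + m) ^ 2)⁻¹) := summable_T le_rfl ha
  have base := tendstoUniformlyOn_tsum_nat (f := fun m (x : ℝ) => ((x + m) ^ 2)⁻¹)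
    (u := fun m : ℕ => ((a + m) ^ 2)⁻¹) hu
    (fun m x hx => ?_) (s := K)
  · have := TUO_succ base
    exact this.congr (by
      filter_upwards with n
      intro x hx
      rfl)
  · have hax : a ≤ x := hbd x hx
    have ham : (0:ℝ) < a + m := by have : (0:ℝ) ≤ m := m.cast_nonneg; linarith
    have hxm : (0:ℝ) < x + m := by linarith
    show ‖((x + (m:ℝ)) ^ 2)⁻¹‖ ≤ ((a + (m:ℝ)) ^ 2)⁻¹
    rw [Real.norm_eq_abs, abs_of_pos (inv_pos.2 (pow_pos hxm 2))]
    apply inv_anti₀ (by positivity)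
    apply pow_le_pow_left₀ ham.le (by linarith)

lemma tlu_f1 : TendstoLocallyUniformlyOn f1 g1 atTop (Ioi 0) := by
  rw [tendstoLocallyUniformlyOn_iff_forall_isCompact isOpen_Ioi]
  intro K hK hKc
  rcases K.eq_empty_or_nonempty with rfl | hne
  · exact tendstoUniformlyOn_empty
  have haK : sInf K ∈ K := hKc.sInf_mem hne
  set a := sInf K with hadef
  set b := sSup K with hbdef
  have ha : 0 < a := hK haK
  have hbd : ∀ x ∈ K, a ≤ x := fun x hx => csInf_le hKc.bddBelow hx
  have hbd' : ∀ x ∈ K, x ≤ b := fun x hx => le_csSup hKc.bddAbove hx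
  have hab : a ≤ b := le_trans (hbd _ haK) (hbd' _ haK)
  -- uniform convergence of the series part
  have hu : Summable (fun m : ℕ => (b + 1) * ((a + m) * ((m:ℝ) + 1))⁻¹) :=
    (summable_ab ha).mul_left _
  have base := tendstoUniformlyOn_tsum_nat (f := fun m (x : ℝ) => (((m : ℝ) + 1)⁻¹ - (x + m)⁻¹))
    (u := fun m : ℕ => (b + 1) * ((a + m) * ((m:ℝ) + 1))⁻¹) hu
    (fun m x hx => ?_) (s := K)
  · -- constant part
    have hconst : Tendsto (fun n : ℕ => Real.log n - (harmonic (n+1) : ℝ)) atTop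
        (𝓝 (-Real.eulerMascheroniConstant)) := by
      have h1 : Tendsto (fun n : ℕ => (harmonic (n+1) : ℝ) - Real.log (n+1)) atTop
          (𝓝 Real.eulerMascheroniConstant) := by
        have := Real.tendsto_harmonic_sub_log.comp (tendsto_add_atTop_nat 1)
        refine this.congr fun n => ?_
        simp only [Function.comp_apply]
        push_cast
        ring_nf
      have h2 := Real.tendsto_log_nat_add_one_sub_log
      have := (h1.add h2).neg
      rw [add_zero] at this
      refine this.congr fun n => ?_
      push_cast
      ring
    have hconstU : TendstoUniformlyOn (fun (n : ℕ) (_ : ℝ) => Real.log n - (harmonic (n+1) : ℝ))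
        (fun _ => -Real.eulerMascheroniConstant) atTop K :=
      hconst.tendstoUniformlyOn_const K
    have hsumU := TUO_succ base
    have hadd := hsumU.add hconstU
    refine hadd.congr ?_ |>.congr_right ?_
    · filter_upwards with n
      intro x hx
      show (∑ m ∈ range (n+1), (((m : ℝ) + 1)⁻¹ - (x + m)⁻¹))
          + (Real.log n - (harmonic (n+1) : ℝ)) = f1 n x
      have hh : (harmonic (n+1) : ℝ) = ∑ m ∈ range (n+1), (((m:ℝ) + 1)⁻¹) := by
        rw [harmonic]
        push_cast
        rfl
      rw [f1, hh, Finset.sum_sub_distrib]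
      ring
    · intro x hx
      show (∑' m : ℕ, (((m : ℝ) + 1)⁻¹ - (x + m)⁻¹)) + -Real.eulerMascheroniConstant = g1 x
      rw [g1]; ring
  · -- the bound
    show ‖((m : ℝ) + 1)⁻¹ - (x + m)⁻¹‖ ≤ (b + 1) * ((a + m) * ((m:ℝ) + 1))⁻¹
    have hax : a ≤ x := hbd x hx
    have hxb : x ≤ b := hbd' x hx
    have hm : (0:ℝ) < (m:ℝ) + 1 := by positivity
    have hxm : (0:ℝ) < x + m := by have : (0:ℝ) ≤ m := m.cast_nonneg; linarith
    have ham : (0:ℝ) < a + m := by have : (0:ℝ) ≤ m := m.cast_nonneg; linarith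
    have he : ((m : ℝ) + 1)⁻¹ - (x + m)⁻¹ = (x - 1) * ((x + m) * ((m:ℝ) + 1))⁻¹ := by
      field_simp
      ring
    rw [he, Real.norm_eq_abs, abs_mul, abs_of_pos (by positivity : (0:ℝ) < ((x+m)*((m:ℝ)+1))⁻¹)]
    have h1 : |x - 1| ≤ b + 1 := by
      rw [abs_le]
      constructor <;> nlinarith
    have h2 : ((x + m) * ((m:ℝ) + 1))⁻¹ ≤ ((a + m) * ((m:ℝ) + 1))⁻¹ := by
      apply inv_anti₀ (by positivity)
      nlinarith
    calc |x - 1| * ((x + m) * ((m:ℝ) + 1))⁻¹ ≤ (b+1) * ((a + m) * ((m:ℝ) + 1))⁻¹ := by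
          apply mul_le_mul h1 h2 (by positivity) (by linarith)
      _ = (b + 1) * ((a + m) * ((m:ℝ) + 1))⁻¹ := rfl

lemma hasDeriv_lgs (n : ℕ) {x : ℝ} (hx : 0 < x) :
    HasDerivAt (fun y => Real.BohrMollerup.logGammaSeq y n) (f1 n x) x := by
  have h1 : HasDerivAt (fun y : ℝ => y * Real.log n + Real.log (Nat.factorial n))
      (Real.log n) x := (hasDerivAt_mul_const _).add_const _
  have h2 : HasDerivAt (fun y : ℝ => ∑ m ∈ range (n+1), Real.log (y + m))
      (∑ m ∈ range (n+1), (x + m)⁻¹) x := by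
    apply HasDerivAt.fun_sum
    intro m hm
    have hxm : (0:ℝ) < x + m := by have : (0:ℝ) ≤ m := m.cast_nonneg; linarith
    have hid : HasDerivAt (fun y : ℝ => y + (m:ℝ)) 1 x := (hasDerivAt_id x).add_const _
    have := (Real.hasDerivAt_log hxm.ne').comp x hid
    simp at this ⊢; exact this
  exact h1.sub h2

lemma hasDeriv_f1 (n : ℕ) {x : ℝ} (hx : 0 < x) :
    HasDerivAt (f1 n) (f2 n x) x := by
  have h2 : HasDerivAt (fun y : ℝ => ∑ m ∈ range (n+1), (y + m)⁻¹)
      (∑ m ∈ range (n+1), -(((x + m) ^ 2)⁻¹)) x := by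
    apply HasDerivAt.fun_sum
    intro m hm
    have hxm : (0:ℝ) < x + m := by have : (0:ℝ) ≤ m := m.cast_nonneg; linarith
    have hid : HasDerivAt (fun y : ℝ => y + (m:ℝ)) 1 x := (hasDerivAt_id x).add_const _
    have := hid.inv hxm.ne'
    refine this.congr_deriv ?_
    field_simp
  have := (hasDerivAt_const x (Real.log n)).sub h2
  unfold f1 f2
  refine this.congr_deriv ?_
  rw [Finset.sum_neg_distrib]
  ring


lemma hasDerivAt_logGamma {x : ℝ} (hx : 0 < x) :
    HasDerivAt (fun y => Real.log (Real.Gamma y)) (g1 x) x := by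
  apply hasDerivAt_of_tendstoLocallyUniformlyOn isOpen_Ioi tlu_f1
    (Filter.Eventually.of_forall fun n => fun y hy => hasDeriv_lgs n hy)
    (fun y hy => Real.BohrMollerup.tendsto_log_gamma hy) hx

lemma digamma_eq {x : ℝ} (hx : 0 < x) : digamma x = g1 x := (hasDerivAt_logGamma hx).deriv

lemma hasDerivAt_g1 {x : ℝ} (hx : 0 < x) : HasDerivAt g1 (T 2 x) x := by
  apply hasDerivAt_of_tendstoLocallyUniformlyOn isOpen_Ioi tlu_f2
    (Filter.Eventually.of_forall fun n => fun y hy => hasDeriv_f1 n hy)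
    (fun y hy => tlu_f1.tendsto_at hy) hx

lemma trigamma_eq {x : ℝ} (hx : 0 < x) : trigamma x = T 2 x := by
  have h1 : digamma =ᶠ[𝓝 x] g1 :=
    Filter.eventually_of_mem (isOpen_Ioi.mem_nhds hx) (fun y hy => digamma_eq hy)
  rw [trigamma, h1.deriv_eq, (hasDerivAt_g1 hx).deriv]

end Stmt14X

open Stmt14X in
theorem stmt_14 (K : ℕ) (hK : 2 ≤ K) (c k : Fin K) (hkc : k ≠ c)
    (α : Fin K → ℝ) (hα : ∀ j, j ≠ c → 1 < α j) :
    ∀ t > (1 : ℝ),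
      0 ≤ deriv
        (fun s : ℝ =>
          (1 / 2) * ∑ j ∈ Finset.univ.erase c,
            (Function.update α k s j - 1) ^ 2 *
              (trigamma (Function.update α k s j) -
                trigamma (1 + ∑ i ∈ Finset.univ.erase c, Function.update α k s i))) t := by
  intro t ht
  classical
  set E : Finset (Fin K) := Finset.univ.erase c with hE
  have hkE : k ∈ E := Finset.mem_erase.2 ⟨hkc, Finset.mem_univ k⟩
  set A : ℝ := 1 + ∑ i ∈ E.erase k, α i with hA
  have hαpos : ∀ i ∈ E.erase k, 1 < α i := by
    intro i hi
    exact hα i (Finset.mem_erase.1 (Finset.mem_erase.1 hi).2).1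
  have hA1 : 1 ≤ A := by
    rw [hA]
    have : (0:ℝ) ≤ ∑ i ∈ E.erase k, α i :=
      Finset.sum_nonneg fun i hi => le_of_lt (lt_trans one_pos (hαpos i hi))
    linarith
  -- the sum identity
  have hsum : ∀ s : ℝ, ∑ i ∈ E, Function.update α k s i = s + ∑ i ∈ E.erase k, α i := by
    intro s
    have h1 : ∑ i ∈ E.erase k, Function.update α k s i = ∑ i ∈ E.erase k, α i :=
      Finset.sum_congr rfl fun i hi => Function.update_of_ne (Finset.mem_erase.1 hi).1 _ _
    rw [← Finset.sum_erase_add E _ hkE, Function.update_self, h1]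
    ring
  set g : ℝ → ℝ := fun s => (1/2) * ((s - 1)^2 * (T 2 s - T 2 (s + A)) +
      ∑ j ∈ E.erase k, (α j - 1)^2 * (T 2 (α j) - T 2 (s + A))) with hg
  have hfg : ∀ s ∈ Ioi (1:ℝ), (1 / 2) * ∑ j ∈ E,
      (Function.update α k s j - 1) ^ 2 *
        (trigamma (Function.update α k s j) -
          trigamma (1 + ∑ i ∈ E, Function.update α k s i)) = g s := by
    intro s hs
    have hs1 : (1:ℝ) < s := hs
    have hsA : (0:ℝ) < s + A := by linarith
    have harg : (1:ℝ) + ∑ i ∈ E, Function.update α k s i = s + A := by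
      rw [hsum s, hA]; ring
    rw [harg]
    rw [← Finset.sum_erase_add E _ hkE, Function.update_self]
    have hcong : ∀ j ∈ E.erase k, (Function.update α k s j - 1) ^ 2 *
        (trigamma (Function.update α k s j) - trigamma (s + A)) =
        (α j - 1)^2 * (T 2 (α j) - T 2 (s + A)) := by
      intro j hj
      rw [Function.update_of_ne (Finset.mem_erase.1 hj).1 _ _,
        trigamma_eq (lt_trans one_pos (hαpos j hj)), trigamma_eq hsA]
    rw [Finset.sum_congr rfl hcong, trigamma_eq (by linarith : (0:ℝ) < s), trigamma_eq hsA, hg]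
    ring
  have hmem : Ioi (1:ℝ) ∈ 𝓝 t := isOpen_Ioi.mem_nhds ht
  have hEq : (fun s : ℝ =>
      (1 / 2) * ∑ j ∈ E,
        (Function.update α k s j - 1) ^ 2 *
          (trigamma (Function.update α k s j) -
            trigamma (1 + ∑ i ∈ E, Function.update α k s i))) =ᶠ[𝓝 t] g :=
    Filter.eventually_of_mem hmem hfg
  rw [hEq.deriv_eq]
  -- now compute the derivative of g
  set v : ℝ := t + A with hv
  have ht0 : (0:ℝ) < t := by linarith
  have hv0 : (0:ℝ) < v := by rw [hv]; linarith
  have hT2v : HasDerivAt (fun s : ℝ => T 2 (s + A)) (-2 * T 3 v) t := by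
    have := (hasDerivAt_T2 hv0).comp t ((hasDerivAt_id t).add_const A)
    simp at this ⊢; exact this
  have hown : HasDerivAt (fun s : ℝ => (s - 1)^2 * (T 2 s - T 2 (s + A)))
      (2*(t-1) * (T 2 t - T 2 v) + (t-1)^2 * (-2 * T 3 t - -2 * T 3 v)) t := by
    have ha : HasDerivAt (fun s : ℝ => (s - 1)^2) (2*(t-1)) t := by
      have := ((hasDerivAt_id t).sub_const 1).pow 2
      simp at this ⊢; exact this
    have hb : HasDerivAt (fun s : ℝ => T 2 s - T 2 (s + A)) (-2 * T 3 t - -2 * T 3 v) t :=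
      (hasDerivAt_T2 ht0).sub hT2v
    have := ha.mul hb
    exact this.congr_deriv (by ring)
  have hrest : HasDerivAt (fun s : ℝ => ∑ j ∈ E.erase k, (α j - 1)^2 * (T 2 (α j) - T 2 (s + A)))
      (∑ j ∈ E.erase k, (α j - 1)^2 * (2 * T 3 v)) t := by
    apply HasDerivAt.fun_sum
    intro j hj
    have := ((hasDerivAt_const t (T 2 (α j))).sub hT2v).const_mul ((α j - 1)^2)
    exact this.congr_deriv (by ring)
  have hgD : HasDerivAt g ((1/2) * ((2*(t-1) * (T 2 t - T 2 v) + (t-1)^2 * (-2 * T 3 t - -2 * T 3 v))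
      + ∑ j ∈ E.erase k, (α j - 1)^2 * (2 * T 3 v))) t := (hown.add hrest).const_mul (1/2)
  rw [hgD.deriv]
  -- positivity
  have h1 := own_term ht hA1
  have hT3v : 0 ≤ T 3 v := T_nonneg 3 hv0
  have hsq : 0 ≤ ∑ j ∈ E.erase k, (α j - 1)^2 * (2 * T 3 v) :=
    Finset.sum_nonneg fun j hj => mul_nonneg (sq_nonneg _) (by linarith)
  have ht1 : 0 ≤ t - 1 := by linarith
  rw [← hv] at h1
  nlinarith [mul_le_mul_of_nonneg_left h1 ht1, hsq]
end
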